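/- Let G = (V,E) be a finite simple graph with |V| = N, and let (AC, P, R) be Bell data satisfying Requirements 1 and 2 in which every sign sequence occurring in P or R is the stabilizer sign sequence s^A of some independent set A ⊆ V. Take the ideal observables A_i = (X_i + Z_i)/√2, B_i = (X_i − Z_i)/√2 for i ∈ AC and A_i = X_i, B_i = Z_i for i ∉ AC, and let B = Σ_{(s,t)∈P}(B_s + B_t) + Σ_{u∈R} B_u with B_s = ∏_{i∈AC, s_i≠0}(A_i + s_i B_i) · ∏_{i∉AC} O_i(s_i), where O_i(0)=I, O_i(+1)=A_i, O_i(−1)=B_i. Then the graph state attains the maximal quantum value: ⟨ψ_G | B | ψ_G⟩ = 2√2·|P| + |R|. -/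

import Mathlib

/-!
STATEMENT 6: for Bell data (AC, P, R) built from stabilizer sign sequences of
independent sets of a graph `G`, the graph state together with the ideal
observables attains the maximal quantum value `2√2|P| + |R|` of the Bell
operator.
-/

open scoped InnerProductSpace

noncomputable section

variable {V : Type} [Fintype V] [DecidableEq V]

/-- The Hilbert space of `|V|` qubits, `ℂ^({0,1}^V)`. -/
abbrev QState (V : Type) [Fintype V] [DecidableEq V] :=
  EuclideanSpace ℂ (V → Bool)

/-- The Pauli `Z` operator on qubit `v`. -/
def pauliZ (v : V) : QState V →ₗ[ℂ] QState V where
  toFun ψ := WithLp.toLp 2 (fun x => (if x v then -1 else 1) * ψ x)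
  map_add' ψ φ := by
    ext x
    simp [mul_add]
  map_smul' c ψ := by
    ext x
    simp [mul_comm, mul_left_comm]

/-- The Pauli `X` operator on qubit `v`. -/
def pauliX (v : V) : QState V →ₗ[ℂ] QState V where
  toFun ψ := WithLp.toLp 2 (fun x => ψ (Function.update x v (!x v)))
  map_add' ψ φ := by ext x; simp
  map_smul' c ψ := by ext x; simp

/-- The number `q(x)` of edges of `G` whose two endpoints both carry the
value `1` in the configuration `x`. -/
def edgeCount (G : SimpleGraph V) [DecidableRel G.Adj] (x : V → Bool) : ℕ :=
  (G.edgeFinset.filter fun e =>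
    Sym2.lift ⟨fun a b => x a && x b, fun _ _ => Bool.and_comm _ _⟩ e = true).card

/-- The graph state `ψ_G`, with amplitudes `(−1)^{q(x)} / 2^{N/2}`. -/
def graphState (G : SimpleGraph V) [DecidableRel G.Adj] : QState V :=
  WithLp.toLp 2 (fun x => (-1 : ℂ) ^ edgeCount G x / ((Real.sqrt 2 : ℝ) : ℂ) ^ Fintype.card V)

/-- The stabilizer sign sequence `s^A` of an independent set `A`. -/
def signSeq (G : SimpleGraph V) [DecidableRel G.Adj] (A : Finset V) (v : V) : ℤ :=
  if v ∈ A then 1 else if Odd (G.neighborFinset v ∩ A).card then -1 else 0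

/-- The observable associated to the symbol `k`: `O_i(0) = I`, `O_i(+1) = A_i`,
`O_i(-1) = B_i`. -/
def obsV (Ao Bo : V → QState V →ₗ[ℂ] QState V) (i : V) (k : ℤ) :
    QState V →ₗ[ℂ] QState V :=
  if k = 1 then Ao i else if k = -1 then Bo i else 1

/-- The Bell operator term
`B_s = ∏_{i∈AC, s_i≠0} (A_i + s_i B_i) · ∏_{i∉AC} O_i(s_i)`
(all factors commute, so the order of the products is irrelevant). -/
def bellTermV (Ao Bo : V → QState V →ₗ[ℂ] QState V) (AC : Finset V)
    (s : V → ℤ) : QState V →ₗ[ℂ] QState V :=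
  ((Finset.univ.filter fun i : V => i ∈ AC ∧ s i ≠ 0).toList.map
      (fun i => Ao i + s i • Bo i)).prod *
  ((Finset.univ.filter fun i : V => i ∉ AC).toList.map
      (fun i => obsV Ao Bo i (s i))).prod

/-- The ideal observable `A_i`: `(X_i + Z_i)/√2` for `i ∈ AC`, `X_i` otherwise. -/
def idealA (AC : Finset V) (i : V) : QState V →ₗ[ℂ] QState V :=
  if i ∈ AC then ((Real.sqrt 2 : ℝ) : ℂ)⁻¹ • (pauliX i + pauliZ i) else pauliX i

/-- The ideal observable `B_i`: `(X_i − Z_i)/√2` for `i ∈ AC`, `Z_i` otherwise. -/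
def idealB (AC : Finset V) (i : V) : QState V →ₗ[ℂ] QState V :=
  if i ∈ AC then ((Real.sqrt 2 : ℝ) : ℂ)⁻¹ • (pauliX i - pauliZ i) else pauliZ i

/- ===== auxiliary machinery ===== -/

def flipL (σ : V → ℤ) (L : List V) (x : V → Bool) : V → Bool :=
  fun v => if v ∈ L ∧ σ v = 1 then !x v else x v

def signL (σ : V → ℤ) (L : List V) (x : V → Bool) : ℂ :=
  (L.map (fun v => if σ v = -1 ∧ x v = true then (-1:ℂ) else 1)).prod

def flipA (A : Finset V) (x : V → Bool) : V → Bool :=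
  fun v => if v ∈ A then !x v else x v

lemma pauliX_apply (v : V) (ψ : QState V) (x : V → Bool) :
    pauliX v ψ x = ψ (Function.update x v (!x v)) := rfl

lemma pauliZ_apply (v : V) (ψ : QState V) (x : V → Bool) :
    pauliZ v ψ x = (if x v then -1 else 1) * ψ x := rfl

lemma prodObs_apply (σ : V → ℤ) :
    ∀ (L : List V), L.Nodup → ∀ (ψ : QState V) (x : V → Bool),
    ((L.map (fun i => obsV pauliX pauliZ i (σ i))).prod) ψ x
      = signL σ L x * ψ (flipL σ L x)
  | [], _, ψ, x => by
      have h : flipL σ [] x = x := by funext v; simp [flipL]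
      rw [h]
      simp [signL, Module.End.one_apply]
  | a :: l, hnd, ψ, x => by
      obtain ⟨ha, hl⟩ := List.nodup_cons.mp hnd
      have ih := prodObs_apply σ l hl ψ
      simp only [List.map_cons, List.prod_cons, Module.End.mul_apply]
      by_cases h1 : σ a = 1
      · have hobs : obsV pauliX pauliZ a (σ a) = pauliX a := by rw [obsV, if_pos h1]
        rw [hobs, pauliX_apply, ih]
        have hsgn : signL σ l (Function.update x a (!x a)) = signL σ l x := by
          unfold signL
          congr 1
          refine List.map_congr_left (fun v hv => ?_)
          have : v ≠ a := fun h => ha (h ▸ hv)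
          rw [Function.update_of_ne this]
        have hflip : flipL σ l (Function.update x a (!x a)) = flipL σ (a :: l) x := by
          funext v
          by_cases hva : v = a
          · subst hva
            simp [flipL, ha, h1, Function.update_self]
          · simp [flipL, Function.update_of_ne hva, hva]
        rw [hsgn, hflip]
        have : signL σ (a :: l) x = signL σ l x := by
          have : ¬ (σ a = -1 ∧ x a = true) := by
            rintro ⟨h, -⟩; rw [h1] at h; norm_num at h
          simp [signL, this]
        rw [this]
      · by_cases h2 : σ a = -1
        · have hobs : obsV pauliX pauliZ a (σ a) = pauliZ a := by
            rw [obsV, if_neg h1, if_pos h2]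
          rw [hobs, pauliZ_apply, ih]
          have hflip : flipL σ l x = flipL σ (a :: l) x := by
            funext v
            by_cases hva : v = a
            · subst hva; simp [flipL, h1]
            · simp [flipL, hva]
          have hsgn : signL σ (a :: l) x
              = (if x a then -1 else 1) * signL σ l x := by
            by_cases hx : x a <;> simp [signL, h2, hx]
          rw [hflip, hsgn, mul_assoc]
        · have hobs : obsV pauliX pauliZ a (σ a) = 1 := by
            rw [obsV, if_neg h1, if_neg h2]
          rw [hobs, Module.End.one_apply, ih]
          have hflip : flipL σ l x = flipL σ (a :: l) x := by
            funext v
            by_cases hva : v = a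
            · subst hva; simp [flipL, h1]
            · simp [flipL, hva]
          have hsgn : signL σ (a :: l) x = signL σ l x := by
            simp [signL, h2]
          rw [hflip, hsgn]

lemma prod_map_smul (c : ℂ) (g : V → QState V →ₗ[ℂ] QState V) :
    ∀ L : List V,
    (L.map (fun i => c • g i)).prod = c ^ L.length • (L.map g).prod
  | [] => by simp
  | a :: l => by
      simp only [List.map_cons, List.prod_cons, prod_map_smul c g l, List.length_cons]
      rw [smul_mul_assoc, mul_smul_comm, smul_smul, pow_succ]
      ring_nf

lemma signL_eq (σ : V → ℤ) (L : List V) (hnd : L.Nodup)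
    (hsupp : ∀ v, v ∉ L → σ v = 0) (x : V → Bool) :
    signL σ L x
      = (-1:ℂ) ^ (Finset.univ.filter (fun v => σ v = -1 ∧ x v = true)).card := by
  unfold signL
  rw [← List.prod_toFinset _ hnd]
  rw [Finset.prod_subset (Finset.subset_univ L.toFinset) (fun v _ hv => by
    have h0 : σ v = 0 := hsupp v (fun h => hv (List.mem_toFinset.mpr h))
    have : ¬ (σ v = -1 ∧ x v = true) := by rintro ⟨h, -⟩; rw [h0] at h; norm_num at h
    rw [if_neg this])]
  rw [Finset.prod_ite, Finset.prod_const, Finset.prod_const, one_pow, mul_one]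

section Parity
variable (G : SimpleGraph V) [DecidableRel G.Adj]

lemma card_incident (v : V) (y : V → Bool) :
    (G.edgeFinset.filter (fun e =>
        Sym2.lift ⟨fun a b => y a && y b, fun _ _ => Bool.and_comm _ _⟩ e = true ∧ v ∈ e)).card
      = (Finset.univ.filter (fun u => G.Adj v u ∧ (y v && y u) = true)).card := by
  symm
  apply Finset.card_bij (fun u _ => s(v, u))
  · intro u hu
    rw [Finset.mem_filter] at hu
    obtain ⟨-, hadj, hval⟩ := hu
    rw [Finset.mem_filter]
    refine ⟨SimpleGraph.mem_edgeFinset.mpr hadj, ?_, ?_⟩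
    · simpa using hval
    · rw [Sym2.mem_iff]; left; rfl
  · intro u₁ _ u₂ _ h
    exact Sym2.congr_right.mp h
  · intro e he
    rw [Finset.mem_filter] at he
    obtain ⟨hef, hval, hve⟩ := he
    induction e with
    | _ a b =>
      have hadj : G.Adj a b := SimpleGraph.mem_edgeFinset.mp hef
      rcases Sym2.mem_iff.mp hve with h | h
      · subst h
        refine ⟨b, ?_, rfl⟩
        rw [Finset.mem_filter]
        exact ⟨Finset.mem_univ _, hadj, by simpa using hval⟩
      · subst h
        refine ⟨a, ?_, ?_⟩
        · rw [Finset.mem_filter]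
          refine ⟨Finset.mem_univ _, hadj.symm, ?_⟩
          simp only [Sym2.lift_mk] at hval
          rw [Bool.and_comm]; exact hval
        · exact Sym2.eq_swap

lemma edgeCount_update (v : V) (x : V → Bool) :
    (edgeCount G (Function.update x v (!x v)) : ZMod 2)
      = edgeCount G x
        + ((Finset.univ.filter (fun u => G.Adj v u ∧ x u = true)).card : ℕ) := by
  set x' := Function.update x v (!x v) with hx'
  have hxu : ∀ u, u ≠ v → x' u = x u := fun u hu => Function.update_of_ne hu _ _
  have hsplit : ∀ y : V → Bool, edgeCount G y =
      (G.edgeFinset.filter (fun e =>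
        Sym2.lift ⟨fun a b => y a && y b, fun _ _ => Bool.and_comm _ _⟩ e = true ∧ v ∈ e)).card
      + (G.edgeFinset.filter (fun e =>
        Sym2.lift ⟨fun a b => y a && y b, fun _ _ => Bool.and_comm _ _⟩ e = true ∧ v ∉ e)).card := by
    intro y
    unfold edgeCount
    rw [← Finset.filter_filter, ← Finset.filter_filter]
    exact (Finset.card_filter_add_card_filter_not (fun e => v ∈ e)).symm
  have hnon : (G.edgeFinset.filter (fun e =>
        Sym2.lift ⟨fun a b => x' a && x' b, fun _ _ => Bool.and_comm _ _⟩ e = true ∧ v ∉ e))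
      = (G.edgeFinset.filter (fun e =>
        Sym2.lift ⟨fun a b => x a && x b, fun _ _ => Bool.and_comm _ _⟩ e = true ∧ v ∉ e)) := by
    apply Finset.filter_congr
    intro e _
    induction e with
    | _ a b =>
      constructor
      · rintro ⟨hval, hne⟩
        rw [Sym2.mem_iff] at hne
        push_neg at hne
        refine ⟨?_, by rw [Sym2.mem_iff]; push_neg; exact hne⟩
        simp only [Sym2.lift_mk] at hval ⊢
        rw [← hxu a (Ne.symm hne.1), ← hxu b (Ne.symm hne.2)]
        exact hval
      · rintro ⟨hval, hne⟩
        rw [Sym2.mem_iff] at hne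
        push_neg at hne
        refine ⟨?_, by rw [Sym2.mem_iff]; push_neg; exact hne⟩
        simp only [Sym2.lift_mk] at hval ⊢
        rw [hxu a (Ne.symm hne.1), hxu b (Ne.symm hne.2)]
        exact hval
  have h1 := hsplit x'
  have h2 := hsplit x
  rw [card_incident] at h1 h2
  by_cases hv : x v = true
  · have hv' : x' v = false := by rw [hx']; simp [hv]
    have hA : (Finset.univ.filter (fun u => G.Adj v u ∧ (x' v && x' u) = true)).card = 0 := by
      rw [Finset.card_eq_zero, Finset.filter_eq_empty_iff]
      rintro u - ⟨-, hval⟩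
      rw [hv'] at hval; simp at hval
    have hB : (Finset.univ.filter (fun u => G.Adj v u ∧ (x v && x u) = true))
        = (Finset.univ.filter (fun u => G.Adj v u ∧ x u = true)) := by
      apply Finset.filter_congr
      intro u _
      rw [hv]; simp
    rw [hA, hnon] at h1
    rw [hB] at h2
    rw [h1, h2]
    push_cast
    have h2N : ((Finset.univ.filter (fun u => G.Adj v u ∧ x u = true)).card : ZMod 2)
        + ((Finset.univ.filter (fun u => G.Adj v u ∧ x u = true)).card : ZMod 2) = 0 := by
      rw [← two_mul]
      exact mul_eq_zero_of_left (by decide) _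
    linear_combination -h2N
  · have hvf : x v = false := by simpa using hv
    have hv' : x' v = true := by rw [hx']; simp [hvf]
    have hA : (Finset.univ.filter (fun u => G.Adj v u ∧ (x v && x u) = true)).card = 0 := by
      rw [Finset.card_eq_zero, Finset.filter_eq_empty_iff]
      rintro u - ⟨-, hval⟩
      rw [hvf] at hval; simp at hval
    have hB : (Finset.univ.filter (fun u => G.Adj v u ∧ (x' v && x' u) = true))
        = (Finset.univ.filter (fun u => G.Adj v u ∧ x u = true)) := by
      apply Finset.filter_congr
      intro u _
      constructor
      · rintro ⟨hadj, hval⟩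
        rw [hv', hxu u hadj.ne'] at hval
        exact ⟨hadj, by simpa using hval⟩
      · rintro ⟨hadj, hval⟩
        rw [hv', hxu u hadj.ne']
        exact ⟨hadj, by simpa using hval⟩
    rw [hB, hnon] at h1
    rw [hA] at h2
    rw [h1, h2]
    push_cast
    ring

lemma card_filter_zmod (p : V → Prop) [DecidablePred p] :
    ((Finset.univ.filter p).card : ZMod 2) = ∑ u : V, if p u then (1 : ZMod 2) else 0 := by
  rw [Finset.card_filter]
  push_cast
  refine Finset.sum_congr rfl fun u _ => by split <;> simp

lemma edgeCount_flipA (x : V → Bool) :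
    ∀ (A : Finset V), (∀ u ∈ A, ∀ w ∈ A, ¬ G.Adj u w) →
    (edgeCount G (flipA A x) : ZMod 2)
      = edgeCount G x
        + ((Finset.univ.filter
            (fun u => x u = true ∧ Odd ((G.neighborFinset u ∩ A).card))).card : ℕ) := by
  intro A
  induction A using Finset.induction_on with
  | empty =>
      intro _
      have h1 : flipA (∅ : Finset V) x = x := by funext v; simp [flipA]
      have h2 : (Finset.univ.filter
          (fun u => x u = true ∧ Odd ((G.neighborFinset u ∩ (∅ : Finset V)).card))) = ∅ := by
        rw [Finset.filter_eq_empty_iff]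
        rintro u - ⟨-, hodd⟩
        simp at hodd
      rw [h1, h2]
      simp
  | @insert a A' ha ih =>
      intro hA
      have hAsub : ∀ u ∈ A', ∀ w ∈ A', ¬ G.Adj u w := fun u hu w hw =>
        hA u (Finset.mem_insert_of_mem hu) w (Finset.mem_insert_of_mem hw)
      have hnadj : ∀ u ∈ A', ¬ G.Adj a u := fun u hu =>
        hA a (Finset.mem_insert_self a A') u (Finset.mem_insert_of_mem hu)
      have hkey : flipA (insert a A') x
          = Function.update (flipA A' x) a (!(flipA A' x a)) := by
        funext v
        by_cases hva : v = a
        · subst hva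
          simp [flipA, ha, Function.update_self]
        · simp [flipA, Finset.mem_insert, hva, Function.update_of_ne hva]
      rw [hkey, edgeCount_update G a (flipA A' x)]
      have hNy : Finset.univ.filter (fun u => G.Adj a u ∧ flipA A' x u = true)
          = Finset.univ.filter (fun u => G.Adj a u ∧ x u = true) := by
        apply Finset.filter_congr
        intro u _
        by_cases hadj : G.Adj a u
        · have hu : u ∉ A' := fun h => hnadj u h hadj
          have : flipA A' x u = x u := if_neg hu
          rw [this]
        · simp [hadj]
      rw [hNy, ih hAsub]
      have hzc : ((Finset.univ.filter
            (fun u => x u = true ∧ Odd ((G.neighborFinset u ∩ insert a A').card))).card : ZMod 2)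
          = ((Finset.univ.filter
              (fun u => x u = true ∧ Odd ((G.neighborFinset u ∩ A').card))).card : ℕ)
            + ((Finset.univ.filter (fun u => G.Adj a u ∧ x u = true)).card : ℕ) := by
        rw [card_filter_zmod, card_filter_zmod, card_filter_zmod, ← Finset.sum_add_distrib]
        refine Finset.sum_congr rfl fun u _ => ?_
        by_cases hx : x u = true
        · simp only [hx, true_and, and_true]
          by_cases hadj : G.Adj a u
          · have hanotin : a ∉ G.neighborFinset u ∩ A' := fun h =>
              ha (Finset.mem_of_mem_inter_right h)
            have hmem : a ∈ G.neighborFinset u := by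
              rw [SimpleGraph.mem_neighborFinset]; exact hadj.symm
            have hins : G.neighborFinset u ∩ insert a A'
                = insert a (G.neighborFinset u ∩ A') := by
              ext w
              simp only [Finset.mem_inter, Finset.mem_insert]
              constructor
              · rintro ⟨hw1, hw2 | hw2⟩
                · exact Or.inl hw2
                · exact Or.inr ⟨hw1, hw2⟩
              · rintro (rfl | ⟨hw1, hw2⟩)
                · exact ⟨hmem, Or.inl rfl⟩
                · exact ⟨hw1, Or.inr hw2⟩
            rw [hins, Finset.card_insert_of_notMem hanotin]
            by_cases hodd : Odd (G.neighborFinset u ∩ A').card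
            · have hno : ¬ Odd ((G.neighborFinset u ∩ A').card + 1) := by
                rw [Nat.odd_add_one]
                exact fun he => he hodd
              rw [if_neg hno, if_pos hodd, if_pos hadj]
              decide
            · have hyes : Odd ((G.neighborFinset u ∩ A').card + 1) := by
                rw [Nat.odd_add_one]
                exact hodd
              rw [if_pos hyes, if_neg hodd, if_pos hadj]
              decide
          · have hnmem : a ∉ G.neighborFinset u := by
              rw [SimpleGraph.mem_neighborFinset]
              exact fun h => hadj h.symm
            have hins : G.neighborFinset u ∩ insert a A' = G.neighborFinset u ∩ A' := by
              ext w
              simp only [Finset.mem_inter, Finset.mem_insert]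
              constructor
              · rintro ⟨hw1, rfl | hw2⟩
                · exact absurd hw1 hnmem
                · exact ⟨hw1, hw2⟩
              · rintro ⟨hw1, hw2⟩
                exact ⟨hw1, Or.inr hw2⟩
            rw [hins, if_neg hadj]
            simp
        · simp [hx]
      push_cast at hzc ⊢
      linear_combination hzc.symm

lemma neg_one_pow_congr' {m n : ℕ} (h : (m : ZMod 2) = (n : ZMod 2)) :
    ((-1 : ℂ)) ^ m = (-1) ^ n := by
  rw [ZMod.natCast_eq_natCast_iff] at h
  have hiff : Even m ↔ Even n := by
    rw [Nat.even_iff, Nat.even_iff, h]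
  by_cases hm : Even m
  · rw [hm.neg_one_pow, (hiff.mp hm).neg_one_pow]
  · rw [(Nat.not_even_iff_odd.mp hm).neg_one_pow,
      (Nat.not_even_iff_odd.mp (fun hn => hm (hiff.mpr hn))).neg_one_pow]

lemma graphState_flip (A : Finset V) (hA : ∀ u ∈ A, ∀ w ∈ A, ¬ G.Adj u w) (x : V → Bool) :
    (-1 : ℂ) ^ ((Finset.univ.filter
        (fun u => x u = true ∧ Odd ((G.neighborFinset u ∩ A).card))).card)
      * graphState G (flipA A x) = graphState G x := by
  unfold graphState
  simp only [WithLp.ofLp_toLp]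
  rw [← mul_div_assoc, ← pow_add]
  congr 1
  apply neg_one_pow_congr'
  push_cast
  have h := edgeCount_flipA G x A hA
  push_cast at h
  linear_combination h + (by
    exact mul_eq_zero_of_left (by decide) _ :
      (2 : ZMod 2) * ((Finset.univ.filter
        (fun u => x u = true ∧ Odd ((G.neighborFinset u ∩ A).card))).card : ZMod 2) = 0)

lemma graphState_norm :
    ∑ x : V → Bool, (starRingEnd ℂ) (graphState G x) * graphState G x = 1 := by
  have hterm : ∀ x : V → Bool,
      (starRingEnd ℂ) (graphState G x) * graphState G x
        = ((2 : ℂ) ^ Fintype.card V)⁻¹ := by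
    intro x
    unfold graphState
    simp only [WithLp.ofLp_toLp]
    rw [map_div₀, map_pow, map_pow, map_neg, map_one, Complex.conj_ofReal,
      div_mul_div_comm, ← mul_pow, ← mul_pow, neg_mul_neg, one_mul, one_pow,
      ← Complex.ofReal_mul, Real.mul_self_sqrt (by norm_num : (0:ℝ) ≤ 2)]
    norm_num
  rw [Finset.sum_congr rfl (fun x _ => hterm x), Finset.sum_const, Finset.card_univ,
    nsmul_eq_mul]
  have hcard : Fintype.card (V → Bool) = 2 ^ Fintype.card V := by
    simp [Fintype.card_fun]
  rw [hcard]
  push_cast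
  exact mul_inv_cancel₀ (pow_ne_zero _ two_ne_zero)

lemma signSeq_eq_one_iff (A : Finset V) (v : V) :
    signSeq G A v = 1 ↔ v ∈ A := by
  unfold signSeq
  split_ifs with h1 h2 <;> simp [h1] <;> norm_num

lemma signSeq_cases (A : Finset V) (v : V) :
    signSeq G A v = 1 ∨ signSeq G A v = -1 ∨ signSeq G A v = 0 := by
  unfold signSeq
  split_ifs <;> simp

lemma signSeq_eq_neg_one_iff (A : Finset V) (hA : ∀ u ∈ A, ∀ w ∈ A, ¬ G.Adj u w) (v : V) :
    signSeq G A v = -1 ↔ Odd ((G.neighborFinset v ∩ A).card) := by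
  unfold signSeq
  by_cases hv : v ∈ A
  · have hempty : G.neighborFinset v ∩ A = ∅ := by
      rw [Finset.eq_empty_iff_forall_notMem]
      rintro w hw
      rw [Finset.mem_inter, SimpleGraph.mem_neighborFinset] at hw
      exact hA v hv w hw.2 hw.1
    rw [if_pos hv, hempty]
    simp
  · rw [if_neg hv]
    split_ifs with h <;> simp [h]

end Parity

lemma sqrt2C_mul_self : ((Real.sqrt 2 : ℝ) : ℂ) * ((Real.sqrt 2 : ℝ) : ℂ) = 2 := by
  rw [← Complex.ofReal_mul, Real.mul_self_sqrt (by norm_num : (0:ℝ) ≤ 2)]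
  norm_num

lemma sqrt2C_ne_zero : ((Real.sqrt 2 : ℝ) : ℂ) ≠ 0 := by
  rw [Complex.ofReal_ne_zero]
  positivity

lemma idealsum_eq (AC : Finset V) (i : V) (hi : i ∈ AC) (k : ℤ)
    (hk : k = 1 ∨ k = -1) :
    idealA AC i + k • idealB AC i
      = ((Real.sqrt 2 : ℝ) : ℂ) • obsV pauliX pauliZ i k := by
  rcases hk with rfl | rfl
  · rw [obsV, if_pos rfl, one_smul, idealA, if_pos hi, idealB, if_pos hi, ← smul_add]
    have h2 : (pauliX i + pauliZ i) + (pauliX i - pauliZ i) = (2:ℂ) • pauliX i := by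
      rw [two_smul]; abel
    rw [h2, smul_smul]
    congr 1
    rw [← sqrt2C_mul_self, inv_mul_cancel_left₀ sqrt2C_ne_zero]
  · rw [obsV, if_neg (by decide), if_pos rfl, idealA, if_pos hi, idealB, if_pos hi]
    have hneg : ((-1 : ℤ) • (((Real.sqrt 2 : ℝ) : ℂ)⁻¹ • (pauliX i - pauliZ i)))
        = -(((Real.sqrt 2 : ℝ) : ℂ)⁻¹ • (pauliX i - pauliZ i)) := by
      simp
    rw [hneg, ← sub_eq_add_neg, ← smul_sub]
    have h2 : (pauliX i + pauliZ i) - (pauliX i - pauliZ i) = (2:ℂ) • pauliZ i := by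
      rw [two_smul]; abel
    rw [h2, smul_smul]
    congr 1
    rw [← sqrt2C_mul_self, inv_mul_cancel_left₀ sqrt2C_ne_zero]

lemma obs_eq (AC : Finset V) (i : V) (hi : i ∉ AC) (k : ℤ) :
    obsV (idealA AC) (idealB AC) i k = obsV pauliX pauliZ i k := by
  simp only [obsV, idealA, idealB, if_neg hi]

lemma val_signSeq (G : SimpleGraph V) [DecidableRel G.Adj] (AC A : Finset V)
    (hA : ∀ u ∈ A, ∀ w ∈ A, ¬ G.Adj u w) :
    ⟪graphState G,
        (bellTermV (idealA AC) (idealB AC) AC (signSeq G A)) (graphState G)⟫_ℂ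
      = ((Real.sqrt 2 : ℝ) : ℂ)
          ^ (Finset.univ.filter (fun i => i ∈ AC ∧ signSeq G A i ≠ 0)).card := by
  set c : ℂ := ((Real.sqrt 2 : ℝ) : ℂ) with hc
  set l1 := Finset.univ.filter (fun i : V => i ∈ AC ∧ signSeq G A i ≠ 0) with hl1
  set l2 := Finset.univ.filter (fun i : V => i ∉ AC) with hl2
  have hmap1 : l1.toList.map (fun i => idealA AC i + signSeq G A i • idealB AC i)
      = l1.toList.map (fun i => c • obsV pauliX pauliZ i (signSeq G A i)) := by
    refine List.map_congr_left fun i hi => ?_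
    rw [Finset.mem_toList, hl1, Finset.mem_filter] at hi
    obtain ⟨-, hiAC, hine⟩ := hi
    have hk : signSeq G A i = 1 ∨ signSeq G A i = -1 := by
      rcases signSeq_cases G A i with h | h | h
      · exact Or.inl h
      · exact Or.inr h
      · exact absurd h hine
    exact idealsum_eq AC i hiAC _ hk
  have hmap2 : l2.toList.map (fun i => obsV (idealA AC) (idealB AC) i (signSeq G A i))
      = l2.toList.map (fun i => obsV pauliX pauliZ i (signSeq G A i)) := by
    refine List.map_congr_left fun i hi => ?_
    rw [Finset.mem_toList, hl2, Finset.mem_filter] at hi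
    exact obs_eq AC i hi.2 _
  have hop : bellTermV (idealA AC) (idealB AC) AC (signSeq G A)
      = c ^ l1.card •
        (((l1.toList ++ l2.toList).map
          (fun i => obsV pauliX pauliZ i (signSeq G A i))).prod) := by
    unfold bellTermV
    rw [← hl1, ← hl2, hmap1, hmap2, prod_map_smul, Finset.length_toList,
      smul_mul_assoc, ← List.prod_append, ← List.map_append]
  have hnd : (l1.toList ++ l2.toList).Nodup := by
    refine List.Nodup.append (Finset.nodup_toList _) (Finset.nodup_toList _) ?_
    intro a h1 h2
    rw [Finset.mem_toList, hl1, Finset.mem_filter] at h1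
    rw [Finset.mem_toList, hl2, Finset.mem_filter] at h2
    exact h2.2 h1.2.1
  have hsupp : ∀ v, v ∉ l1.toList ++ l2.toList → signSeq G A v = 0 := by
    intro v hv
    rw [List.mem_append] at hv
    push_neg at hv
    obtain ⟨hv1, hv2⟩ := hv
    rw [Finset.mem_toList, hl1, Finset.mem_filter] at hv1
    rw [Finset.mem_toList, hl2, Finset.mem_filter] at hv2
    have hvAC : v ∈ AC := by
      by_contra h
      exact hv2 ⟨Finset.mem_univ _, h⟩
    by_contra h
    exact hv1 ⟨Finset.mem_univ _, hvAC, h⟩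
  have hflip : ∀ x : V → Bool,
      flipL (signSeq G A) (l1.toList ++ l2.toList) x = flipA A x := by
    intro x
    funext v
    have hiff : (v ∈ l1.toList ++ l2.toList ∧ signSeq G A v = 1) ↔ v ∈ A := by
      constructor
      · rintro ⟨-, h1⟩
        exact (signSeq_eq_one_iff G A v).mp h1
      · intro hvA
        have hs1 : signSeq G A v = 1 := (signSeq_eq_one_iff G A v).mpr hvA
        refine ⟨?_, hs1⟩
        by_contra h
        rw [hsupp v h] at hs1
        exact absurd hs1 (by decide)
    unfold flipL flipA
    exact if_congr hiff rfl rfl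
  have hsgnset : ∀ x : V → Bool,
      (Finset.univ.filter (fun v => signSeq G A v = -1 ∧ x v = true))
        = (Finset.univ.filter
            (fun v => x v = true ∧ Odd ((G.neighborFinset v ∩ A).card))) := by
    intro x
    apply Finset.filter_congr
    intro v _
    rw [signSeq_eq_neg_one_iff G A hA v, and_comm]
  rw [hop, LinearMap.smul_apply, inner_smul_right]
  have hinner : ⟪graphState G,
      (((l1.toList ++ l2.toList).map
        (fun i => obsV pauliX pauliZ i (signSeq G A i))).prod) (graphState G)⟫_ℂ = 1 := by
    rw [PiLp.inner_apply]
    have hpt : ∀ x : V → Bool,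
        (starRingEnd ℂ) (graphState G x)
          * (((l1.toList ++ l2.toList).map
              (fun i => obsV pauliX pauliZ i (signSeq G A i))).prod) (graphState G) x
        = (starRingEnd ℂ) (graphState G x) * graphState G x := by
      intro x
      rw [prodObs_apply (signSeq G A) _ hnd, signL_eq (signSeq G A) _ hnd hsupp,
        hsgnset x, hflip x, graphState_flip G A hA x]
    simp only [RCLike.inner_apply]
    refine (Finset.sum_congr rfl (fun x _ => ?_)).trans (graphState_norm G)
    rw [mul_comm]; exact hpt x
  rw [hinner, mul_one]

lemma sum_map_const {α : Type*} (l : List α) (c : ℂ) :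
    (l.map fun _ => c).sum = l.length * c := by
  induction l with
  | nil => simp
  | cons a t ih => simp [ih]; push_cast; ring


theorem graphState_attains_quantum_bound
    (G : SimpleGraph V) [DecidableRel G.Adj]
    (AC : Finset V)
    (P : List ((V → ℤ) × (V → ℤ))) (R : List (V → ℤ))
    -- every occurring sign sequence is the sign sequence of an independent set
    (hstabP : ∀ p ∈ P, (∃ A : Finset V, (∀ u ∈ A, ∀ w ∈ A, ¬ G.Adj u w) ∧
                          p.1 = signSeq G A) ∧
                       (∃ A : Finset V, (∀ u ∈ A, ∀ w ∈ A, ¬ G.Adj u w) ∧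
                          p.2 = signSeq G A))
    (hstabR : ∀ u ∈ R, ∃ A : Finset V, (∀ x ∈ A, ∀ y ∈ A, ¬ G.Adj x y) ∧
                          u = signSeq G A)
    -- Requirement 1
    (hreq1 : ∀ p ∈ P, ∃ T ∈ AC, p.1 T * p.2 T = -1 ∧
      ∀ i ∈ AC, i ≠ T → p.1 i = 0 ∧ p.2 i = 0)
    -- Requirement 2
    (hreq2 : ∀ u ∈ R, ∀ i ∈ AC, u i = 0) :
    ⟪graphState G,
      ((P.map (fun p => bellTermV (idealA AC) (idealB AC) AC p.1
                        + bellTermV (idealA AC) (idealB AC) AC p.2)).sum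
        + (R.map (fun u => bellTermV (idealA AC) (idealB AC) AC u)).sum)
        (graphState G)⟫_ℂ
      = ((2 * Real.sqrt 2 * P.length + R.length : ℝ) : ℂ) := by
  have hPval : ∀ p ∈ P,
      ⟪graphState G, (bellTermV (idealA AC) (idealB AC) AC p.1
          + bellTermV (idealA AC) (idealB AC) AC p.2) (graphState G)⟫_ℂ
        = 2 * ((Real.sqrt 2 : ℝ) : ℂ) := by
    intro p hp
    obtain ⟨⟨A1, hA1, e1⟩, ⟨A2, hA2, e2⟩⟩ := hstabP p hp
    obtain ⟨T, hT, hTprod, hTzero⟩ := hreq1 p hp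
    have hfil : ∀ (f : V → ℤ), f T ≠ 0 → (∀ i ∈ AC, i ≠ T → f i = 0) →
        Finset.univ.filter (fun i => i ∈ AC ∧ f i ≠ 0) = {T} := by
      intro f hfT hfz
      ext i
      simp only [Finset.mem_filter, Finset.mem_univ, true_and, Finset.mem_singleton]
      constructor
      · rintro ⟨hiAC, hne⟩
        by_contra hiT
        exact hne (hfz i hiAC hiT)
      · rintro rfl
        exact ⟨hT, hfT⟩
    have h1ne : p.1 T ≠ 0 := fun h => by rw [h] at hTprod; simp at hTprod
    have h2ne : p.2 T ≠ 0 := fun h => by rw [h] at hTprod; simp at hTprod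
    have v1 : ⟪graphState G,
        (bellTermV (idealA AC) (idealB AC) AC p.1) (graphState G)⟫_ℂ
        = ((Real.sqrt 2 : ℝ) : ℂ) := by
      rw [e1, val_signSeq G AC A1 hA1]
      have hs : Finset.univ.filter (fun i => i ∈ AC ∧ signSeq G A1 i ≠ 0) = {T} := by
        rw [← e1]
        exact hfil p.1 h1ne (fun i hi hne => (hTzero i hi hne).1)
      rw [hs, Finset.card_singleton, pow_one]
    have v2 : ⟪graphState G,
        (bellTermV (idealA AC) (idealB AC) AC p.2) (graphState G)⟫_ℂ
        = ((Real.sqrt 2 : ℝ) : ℂ) := by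
      rw [e2, val_signSeq G AC A2 hA2]
      have hs : Finset.univ.filter (fun i => i ∈ AC ∧ signSeq G A2 i ≠ 0) = {T} := by
        rw [← e2]
        exact hfil p.2 h2ne (fun i hi hne => (hTzero i hi hne).2)
      rw [hs, Finset.card_singleton, pow_one]
    rw [LinearMap.add_apply, inner_add_right, v1, v2]
    ring
  have hRval : ∀ u ∈ R,
      ⟪graphState G, (bellTermV (idealA AC) (idealB AC) AC u) (graphState G)⟫_ℂ
        = 1 := by
    intro u hu
    obtain ⟨A, hA, e⟩ := hstabR u hu
    rw [e, val_signSeq G AC A hA]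
    have hs : Finset.univ.filter (fun i => i ∈ AC ∧ signSeq G A i ≠ 0) = ∅ := by
      rw [Finset.filter_eq_empty_iff]
      rintro i - ⟨hiAC, hne⟩
      apply hne
      rw [← e]
      exact hreq2 u hu i hiAC
    rw [hs, Finset.card_empty, pow_zero]
  have key : ∀ (l : List (QState V →ₗ[ℂ] QState V)),
      ⟪graphState G, (l.sum) (graphState G)⟫_ℂ
        = (l.map (fun m => ⟪graphState G, m (graphState G)⟫_ℂ)).sum := by
    intro l
    induction l with
    | nil => simp
    | cons a t ih =>
        simp only [List.sum_cons, List.map_cons, LinearMap.add_apply, inner_add_right, ih]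
  rw [LinearMap.add_apply, inner_add_right, key, key, List.map_map, List.map_map]
  have eP : P.map ((fun m => ⟪graphState G, m (graphState G)⟫_ℂ)
        ∘ (fun p => bellTermV (idealA AC) (idealB AC) AC p.1
            + bellTermV (idealA AC) (idealB AC) AC p.2))
      = P.map (fun _ => 2 * ((Real.sqrt 2 : ℝ) : ℂ)) := by
    refine List.map_congr_left fun p hp => ?_
    exact hPval p hp
  have eR : R.map ((fun m => ⟪graphState G, m (graphState G)⟫_ℂ)
        ∘ (fun u => bellTermV (idealA AC) (idealB AC) AC u))
      = R.map (fun _ => (1 : ℂ)) := by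
    refine List.map_congr_left fun u hu => ?_
    exact hRval u hu
  rw [eP, eR, sum_map_const, sum_map_const]
  push_cast
  ring

end
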